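/- Let Z be a set of T distinct datapoints, W ⊆ ℝ^d closed convex with diameter at most D, each f(·;z) G-Lipschitz and β-smooth, F(w) := (1/T)∑_{z∈Z} f(w;z) λ-strongly convex with minimizer w*, and κ := β/λ. Run SGD-without-replacement with step sizes η_t = min{ λ/(2β²), 4/(λt) } for τ = T/(2κ) rounds on a random order sequence z_1,…,z_T ∼ 𝒵(T), i.e., w_{t+1} = Π_W(w_t − η_t ∇f(w_t; z_t)). Then for all t ≤ τ, the gradient-bias error satisfies E[ (∇F(w_t) − ∇f(w_t; z_t))ᵀ(w_t − w*) ] ≤ 8G(G + βD)/(λT). -/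

import Mathlib

open Finset

set_option maxHeartbeats 2000000

lemma proj_nonexp {F : Type*} [NormedAddCommGroup F] [InnerProductSpace ℝ F]
    {W : Set F} (hWconv : Convex ℝ W) (hne : W.Nonempty)
    (proj : F → F)
    (hproj : ∀ x, proj x ∈ W ∧ ∀ w ∈ W, ‖x - proj x‖ ≤ ‖x - w‖) :
    ∀ a b, ‖proj a - proj b‖ ≤ ‖a - b‖ := by
  have hVI : ∀ x, ∀ w ∈ W, (inner ℝ (x - proj x) (w - proj x) : ℝ) ≤ 0 := by
    intro x
    have heq : ‖x - proj x‖ = ⨅ w : W, ‖x - (w : F)‖ := by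
      haveI : Nonempty W := hne.to_subtype
      apply le_antisymm
      · exact le_ciInf fun w => (hproj x).2 w w.2
      · have hbdd : BddBelow (Set.range (fun w : W => ‖x - (w : F)‖)) :=
          ⟨0, by rintro r ⟨w, rfl⟩; exact norm_nonneg _⟩
        exact ciInf_le hbdd ⟨proj x, (hproj x).1⟩
    exact (norm_eq_iInf_iff_real_inner_le_zero hWconv (hproj x).1).1 heq
  intro a b
  have h1 := hVI a (proj b) (hproj b).1
  have h2 := hVI b (proj a) (hproj a).1
  have key : ‖proj a - proj b‖ ^ 2 ≤ (inner ℝ (a - b) (proj a - proj b) : ℝ) := by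
    have e1 : (inner ℝ (a - b) (proj a - proj b) : ℝ) - ‖proj a - proj b‖ ^ 2
        = -(inner ℝ (a - proj a) (proj b - proj a) : ℝ)
          - (inner ℝ (b - proj b) (proj a - proj b) : ℝ) := by
      rw [← real_inner_self_eq_norm_sq]
      simp only [inner_sub_left, inner_sub_right]
      ring
    linarith
  have cs : (inner ℝ (a - b) (proj a - proj b) : ℝ) ≤ ‖a - b‖ * ‖proj a - proj b‖ :=
    real_inner_le_norm _ _
  nlinarith [norm_nonneg (proj a - proj b), norm_nonneg (a - b)]
open Finset


-- gradient of (1/T) * sum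
lemma gradient_avg_sum {F : Type*} [NormedAddCommGroup F] [InnerProductSpace ℝ F]
    [CompleteSpace F] {ι : Type*} [Fintype ι] (c : ℝ) (f : F → ι → ℝ)
    (hdiff : ∀ z, Differentiable ℝ (fun w => f w z)) (x : F) :
    gradient (fun u => c * ∑ z, f u z) x = c • ∑ z, gradient (fun u => f u z) x := by
  have hfd : fderiv ℝ (fun u => c * ∑ z, f u z) x
      = c • ∑ z : ι, fderiv ℝ (fun u => f u z) x := by
    rw [fderiv_const_mul, fderiv_fun_sum (fun i _ => (hdiff i).differentiableAt)]
    exact (Differentiable.fun_sum (fun i _ => hdiff i)).differentiableAt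
  show (InnerProductSpace.toDual ℝ F).symm _ = _
  rw [hfd, map_smul, map_sum]
  rfl

-- telescoping sum
lemma teleSum (lam : ℝ) (hlam : 0 < lam) (η : ℕ → ℝ)
    (hnn : ∀ r : ℕ, 1 ≤ r → 0 ≤ η r) (hle : ∀ r : ℕ, 1 ≤ r → lam * η r / 4 ≤ 1) :
    ∀ m : ℕ, ∑ q ∈ range m, η (q+1) * ∏ r ∈ Icc (q+2) m, (1 - lam * η r / 4)
      ≤ 4 / lam := by
  have key : ∀ m : ℕ, ∑ q ∈ range m, η (q+1) * ∏ r ∈ Icc (q+2) m, (1 - lam * η r / 4)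
      ≤ (4 / lam) * (1 - ∏ r ∈ Icc 1 m, (1 - lam * η r / 4)) := by
    intro m
    induction m with
    | zero => simp
    | succ m ih =>
      have hsplit : ∑ q ∈ range (m+1), η (q+1) * ∏ r ∈ Icc (q+2) (m+1), (1 - lam * η r / 4)
          = (1 - lam * η (m+1) / 4) *
              (∑ q ∈ range m, η (q+1) * ∏ r ∈ Icc (q+2) m, (1 - lam * η r / 4))
            + η (m+1) := by
        rw [Finset.sum_range_succ]
        have h1 : ∏ r ∈ Icc (m+2) (m+1), (1 - lam * η r / 4) = 1 := by
          rw [Finset.Icc_eq_empty (by omega)]; simp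
        rw [h1, Finset.mul_sum]
        congr 1
        · rw [Finset.sum_congr rfl]
          intro q hq
          rw [Finset.prod_Icc_succ_top (by simp at hq; omega)]
          ring
        · ring
      rw [hsplit]
      have hfac : (0:ℝ) ≤ 1 - lam * η (m+1) / 4 := by
        have := hle (m+1) (by omega); linarith
      have hP : ∏ r ∈ Icc 1 (m+1), (1 - lam * η r / 4)
          = (∏ r ∈ Icc 1 m, (1 - lam * η r / 4)) * (1 - lam * η (m+1) / 4) :=
        Finset.prod_Icc_succ_top (by omega) _
      have h2 := mul_le_mul_of_nonneg_left ih hfac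
      have hx : η (m+1) = (4/lam) * (lam * η (m+1) / 4) := by field_simp
      rw [hP]
      nlinarith [hnn (m+1) (by omega)]
  intro m
  refine (key m).trans ?_
  have hP : (0:ℝ) ≤ ∏ r ∈ Icc 1 m, (1 - lam * η r / 4) := by
    apply Finset.prod_nonneg
    intro r hr
    have := hle r (by simp at hr; omega); linarith
  have : (0:ℝ) < 4 / lam := by positivity
  nlinarith
open Finset



/-- `F` is `μ`-strongly convex on `W` (via its gradient). -/
def StrongConvexOnSet {d : ℕ} (W : Set (EuclideanSpace ℝ (Fin d))) (μ : ℝ)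
    (F : EuclideanSpace ℝ (Fin d) → ℝ) : Prop :=
  ∀ x ∈ W, ∀ y ∈ W,
    F x + (inner ℝ (gradient F x) (y - x) : ℝ) + μ / 2 * ‖y - x‖ ^ 2 ≤ F y

/-- `gdIter proj f η zs w1 m` is the iterate `w_{m+1}` obtained by `m` projected gradient
steps `w_{t+1} = Π(w_t - η_t ∇f(w_t; z_t))` on the datapoint sequence `zs`, from `w1`. -/
noncomputable def gdIter {d : ℕ} {Z : Type*}
    (proj : EuclideanSpace ℝ (Fin d) → EuclideanSpace ℝ (Fin d))
    (f : EuclideanSpace ℝ (Fin d) → Z → ℝ) (η : ℕ → ℝ) (zs : ℕ → Z)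
    (w1 : EuclideanSpace ℝ (Fin d)) : ℕ → EuclideanSpace ℝ (Fin d)
  | 0 => w1
  | t + 1 => proj (gdIter proj f η zs w1 t
      - η (t + 1) • gradient (fun u => f u (zs (t + 1))) (gdIter proj f η zs w1 t))

/-- `ordSeq hT σ t` is the `t`-th datapoint `z_t = σ(t)` of the random-order sequence
induced by the permutation `σ` (rounds are 1-indexed). -/
def ordSeq {T : ℕ} (hT : 0 < T) (σ : Equiv.Perm (Fin T)) : ℕ → Fin T :=
  fun t => σ ⟨(t - 1) % T, Nat.mod_lt _ hT⟩

lemma gdIter_congr {d : ℕ} {Z : Type*} (proj : EuclideanSpace ℝ (Fin d) → EuclideanSpace ℝ (Fin d))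
    (f : EuclideanSpace ℝ (Fin d) → Z → ℝ) (η : ℕ → ℝ) (w1 : EuclideanSpace ℝ (Fin d)) :
    ∀ (m : ℕ) (zs zs' : ℕ → Z), (∀ r, 1 ≤ r → r ≤ m → zs r = zs' r) →
      gdIter proj f η zs w1 m = gdIter proj f η zs' w1 m := by
  intro m
  induction m with
  | zero => intro _ _ _; rfl
  | succ m ih =>
    intro zs zs' h
    show proj _ = proj _
    rw [ih zs zs' (fun r h1 h2 => h r h1 (h2.trans (Nat.le_succ m))),
      h (m+1) (by omega) le_rfl]

lemma gdIter_mem {d : ℕ} {Z : Type*} {W : Set (EuclideanSpace ℝ (Fin d))}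
    (proj : EuclideanSpace ℝ (Fin d) → EuclideanSpace ℝ (Fin d))
    (hprojW : ∀ x, proj x ∈ W)
    (f : EuclideanSpace ℝ (Fin d) → Z → ℝ) (η : ℕ → ℝ) (zs : ℕ → Z)
    (w1 : EuclideanSpace ℝ (Fin d)) (hw1 : w1 ∈ W) :
    ∀ m, gdIter proj f η zs w1 m ∈ W := by
  intro m
  cases m with
  | zero => exact hw1
  | succ m => exact hprojW _

-- cardinality of the conditioning complement
lemma card_J {T m t : ℕ} (hm : m + 1 < t) (ht : t ≤ T) :
    (Finset.univ.filter (fun j : Fin T => m ≤ (j : ℕ) ∧ (j : ℕ) ≠ t - 1)).card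
      = T - m - 1 := by
  have hb : ((Finset.univ : Finset (Fin T)).filter
      (fun j : Fin T => m ≤ (j : ℕ) ∧ (j : ℕ) ≠ t - 1)).card
      = ((Finset.range T).filter (fun x => m ≤ x ∧ x ≠ t - 1)).card := by
    refine Finset.card_bij' (fun (j : Fin T) _ => (j : ℕ))
      (fun x hx => ⟨x, by simp only [Finset.mem_filter, Finset.mem_range] at hx; exact hx.1⟩)
      ?_ ?_ ?_ ?_
    · intro a ha
      simp only [Finset.mem_filter, Finset.mem_univ, true_and] at ha
      simp only [Finset.mem_filter, Finset.mem_range]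
      exact ⟨a.isLt, ha⟩
    · intro b hb
      simp only [Finset.mem_filter, Finset.mem_range] at hb
      simp only [Finset.mem_filter, Finset.mem_univ, true_and]
      exact hb.2
    · intro a ha; rfl
    · intro b hb; rfl
  rw [hb]
  have : (Finset.range T).filter (fun x => m ≤ x ∧ x ≠ t - 1)
      = (Finset.Ico m T).erase (t-1) := by
    ext x
    simp only [Finset.mem_filter, Finset.mem_range, Finset.mem_erase, Finset.mem_Ico]
    tauto
  rw [this, Finset.card_erase_of_mem (by simp only [Finset.mem_Ico]; omega), Nat.card_Ico]

lemma avg_contract {E : Type*} [NormedAddCommGroup E] [InnerProductSpace ℝ E]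
    {ι : Type*} (J : Finset ι) (ee : E) (dd : ι → E) (ηv β lam Tr mr : ℝ)
    (hd : ∀ j ∈ J, ‖dd j‖ ≤ β * ‖ee‖)
    (hJi : Tr * (lam * ‖ee‖^2) - mr * (β * ‖ee‖^2) ≤ (inner ℝ ee (∑ j ∈ J, dd j) : ℝ))
    (hβ : 0 < β) (hlam : 0 < lam) (hηv : 0 ≤ ηv) (hcap : ηv * β^2 ≤ lam/2)
    (hmr : mr * β ≤ Tr * lam / 2) (hcard : (J.card : ℝ) ≤ Tr) :
    ∑ j ∈ J, ‖ee - ηv • dd j‖^2 ≤ (J.card : ℝ) * ((1 - lam * ηv / 4)^2 * ‖ee‖^2) := by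
  have expand : ∀ j ∈ J, ‖ee - ηv • dd j‖^2
      = ‖ee‖^2 - 2 * ηv * (inner ℝ ee (dd j) : ℝ) + ηv^2 * ‖dd j‖^2 := by
    intro j _
    rw [norm_sub_sq_real, real_inner_smul_right, norm_smul, Real.norm_eq_abs, mul_pow, sq_abs]
    ring
  rw [Finset.sum_congr rfl expand, Finset.sum_add_distrib, Finset.sum_sub_distrib,
    Finset.sum_const, nsmul_eq_mul, ← Finset.mul_sum, ← Finset.mul_sum, ← inner_sum]
  have hsumd : ∑ j ∈ J, ‖dd j‖^2 ≤ (J.card:ℝ) * (β^2 * ‖ee‖^2) := by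
    calc ∑ j ∈ J, ‖dd j‖^2 ≤ ∑ _j ∈ J, β^2 * ‖ee‖^2 := by
          apply Finset.sum_le_sum
          intro j hj
          calc ‖dd j‖^2 ≤ (β * ‖ee‖)^2 := pow_le_pow_left₀ (norm_nonneg _) (hd j hj) 2
            _ = β^2 * ‖ee‖^2 := by ring
      _ = (J.card:ℝ) * (β^2 * ‖ee‖^2) := by rw [Finset.sum_const, nsmul_eq_mul]
  have hS : (0:ℝ) ≤ ‖ee‖^2 := sq_nonneg _
  have hn0 : (0:ℝ) ≤ (J.card:ℝ) := Nat.cast_nonneg _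
  nlinarith [mul_le_mul_of_nonneg_left hJi (by linarith : (0:ℝ) ≤ 2 * ηv),
    mul_le_mul_of_nonneg_left hsumd (sq_nonneg ηv),
    mul_nonneg (mul_nonneg hn0 hηv) (mul_nonneg (by linarith : (0:ℝ) ≤ lam / 2 - ηv * β^2) hS),
    mul_nonneg (mul_nonneg (by linarith : (0:ℝ) ≤ Tr - (J.card:ℝ)) (mul_nonneg hηv hlam.le)) hS,
    mul_nonneg hn0 (mul_nonneg (mul_nonneg (sq_nonneg lam) (sq_nonneg ηv)) hS),
    mul_nonneg (mul_nonneg hηv (by linarith : (0:ℝ) ≤ Tr * lam / 2 - mr * β)) hS]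

/-- (Lemma 4.5 of the paper.)  For SGD without replacement with step
sizes `η_t = min{λ/(2β²), 4/(λ t)}`, run for `τ = T/(2κ)` rounds (`κ = β/λ`), the
gradient-bias error at every round `t ≤ τ` satisfies
`E[⟨∇F(w_t) - ∇f(w_t; z_t), w_t - w*⟩] ≤ 8G(G + βD)/(λT)`.
The iterate is `w_t = gdIter … (t-1)`, `z_t = σ(t)`, and the expectation is the average
over all permutations `σ`. -/
theorem sgd_without_replacement_gradient_bias
    {d : ℕ} (T : ℕ) (hT1 : 1 ≤ T)
    (W : Set (EuclideanSpace ℝ (Fin d))) (hWconv : Convex ℝ W) (hWclosed : IsClosed W)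
    (D : ℝ) (hD : 0 ≤ D) (hdiam : ∀ x ∈ W, ∀ y ∈ W, ‖x - y‖ ≤ D)
    (proj : EuclideanSpace ℝ (Fin d) → EuclideanSpace ℝ (Fin d))
    (hproj : ∀ x, proj x ∈ W ∧ ∀ w ∈ W, ‖x - proj x‖ ≤ ‖x - w‖)
    (f : EuclideanSpace ℝ (Fin d) → Fin T → ℝ)
    (G β lam : ℝ) (hG : 0 < G) (hβ : 0 < β) (hlam : 0 < lam)
    (hdiff : ∀ z, Differentiable ℝ (fun w => f w z))
    (hLip : ∀ z, ∀ w ∈ W, ‖gradient (fun u => f u z) w‖ ≤ G)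
    (hsmooth : ∀ z, ∀ x ∈ W, ∀ y ∈ W,
      ‖gradient (fun u => f u z) x - gradient (fun u => f u z) y‖ ≤ β * ‖x - y‖)
    (hstrong : StrongConvexOnSet W lam (fun w => (1 / T : ℝ) * ∑ z : Fin T, f w z))
    (wstar : EuclideanSpace ℝ (Fin d)) (hws : wstar ∈ W)
    (hmin : ∀ w ∈ W, (1 / T : ℝ) * ∑ z : Fin T, f wstar z ≤ (1 / T : ℝ) * ∑ z : Fin T, f w z)
    (η : ℕ → ℝ) (hη : ∀ t : ℕ, η t = min (lam / (2 * β ^ 2)) (4 / (lam * t)))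
    (w1 : EuclideanSpace ℝ (Fin d)) (hw1 : w1 ∈ W)
    -- round `t ≤ τ = T/(2κ)`
    (t : ℕ) (ht1 : 1 ≤ t) (htT : t ≤ T) (htτ : (t : ℝ) ≤ (T : ℝ) / (2 * (β / lam))) :
    (∑ σ : Equiv.Perm (Fin T),
        (inner ℝ
          (gradient (fun u => (1 / T : ℝ) * ∑ z : Fin T, f u z)
              (gdIter proj f η (ordSeq (by omega) σ) w1 (t - 1))
            - gradient (fun u => f u (ordSeq (by omega) σ t))
              (gdIter proj f η (ordSeq (by omega) σ) w1 (t - 1)))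
          (gdIter proj f η (ordSeq (by omega) σ) w1 (t - 1) - wstar) : ℝ))
      / (Nat.factorial T : ℝ)
    ≤ 8 * G * (G + β * D) / (lam * T) := by
  have hT : 0 < T := hT1
  -- basic numeric facts
  have hT0 : (0:ℝ) < T := by exact_mod_cast hT
  have hηnn : ∀ r : ℕ, 0 ≤ η r := by
    intro r; rw [hη]; apply le_min <;> positivity
  have hηcap : ∀ r : ℕ, η r * β ^ 2 ≤ lam / 2 := by
    intro r
    have h1 : η r ≤ lam / (2 * β ^ 2) := by rw [hη]; exact min_le_left _ _
    have hb2 : (0:ℝ) < β ^ 2 := by positivity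
    calc η r * β ^ 2 ≤ lam / (2 * β ^ 2) * β ^ 2 := by gcongr
      _ = lam / 2 := by field_simp
  have hηr : ∀ r : ℕ, 1 ≤ r → lam * η r ≤ 4 / r := by
    intro r hr
    have h1 : η r ≤ 4 / (lam * r) := by rw [hη]; exact min_le_right _ _
    have hr0 : (0:ℝ) < r := by exact_mod_cast hr
    calc lam * η r ≤ lam * (4 / (lam * r)) := by gcongr
      _ = 4 / r := by field_simp
  have hfac0 : ∀ r : ℕ, 1 ≤ r → 0 ≤ 1 - lam * η r / 4 := by
    intro r hr
    have h1 := hηr r hr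
    have hr1 : (1:ℝ) ≤ r := by exact_mod_cast hr
    have : (4:ℝ)/r ≤ 4 := by
      rw [div_le_iff₀ (by linarith)]; nlinarith
    linarith
  have hprod0 : ∀ (a b : ℕ), 1 ≤ a → 0 ≤ ∏ r ∈ Icc a b, (1 - lam * η r / 4) := by
    intro a b ha
    apply Finset.prod_nonneg
    intro r hr
    exact hfac0 r (by simp only [Finset.mem_Icc] at hr; omega)
  -- geometry facts
  have nonexp := proj_nonexp hWconv ⟨w1, hw1⟩ proj hproj
  have hbD : ∀ v ∈ W, ‖v - wstar‖ ≤ D := fun v hv => hdiam v hv wstar hws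
  have gFz : ∀ u, gradient (fun u => (1 / T : ℝ) * ∑ z : Fin T, f u z) u
      = (1 / T : ℝ) • ∑ z : Fin T, gradient (fun x => f x z) u :=
    gradient_avg_sum (1/T : ℝ) f hdiff
  have mono : ∀ x ∈ W, ∀ y ∈ W,
      lam * ‖x - y‖ ^ 2 ≤ (inner ℝ (gradient (fun u => (1 / T : ℝ) * ∑ z : Fin T, f u z) x
        - gradient (fun u => (1 / T : ℝ) * ∑ z : Fin T, f u z) y) (x - y) : ℝ) := by
    intro x hx y hy
    have h1 := hstrong x hx y hy
    have h2 := hstrong y hy x hx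
    have hn : ‖y - x‖ = ‖x - y‖ := norm_sub_rev _ _
    simp only [inner_sub_left] at *
    have e2 : (inner ℝ (gradient (fun u => (1 / T : ℝ) * ∑ z : Fin T, f u z) x) (y - x) : ℝ)
        = -(inner ℝ (gradient (fun u => (1 / T : ℝ) * ∑ z : Fin T, f u z) x) (x - y) : ℝ) := by
      rw [← inner_neg_right]; congr 1; abel
    rw [hn, e2] at h1
    linarith
  -- the iterate map
  set w : Equiv.Perm (Fin T) → ℕ → EuclideanSpace ℝ (Fin d) :=
    fun σ m => gdIter proj f η (ordSeq hT σ) w1 m with hwdef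
  have memW : ∀ (σ : Equiv.Perm (Fin T)) (m : ℕ), w σ m ∈ W :=
    fun σ m => gdIter_mem proj (fun x => (hproj x).1) f η (ordSeq hT σ) w1 hw1 m
  have hord : ∀ (σ : Equiv.Perm (Fin T)) (r : ℕ) (h1 : 1 ≤ r) (h2 : r ≤ T),
      ordSeq hT σ r = σ ⟨r - 1, by omega⟩ := by
    intro σ r h1 h2
    unfold ordSeq
    congr 1
    exact Fin.ext (by simp only [Fin.val_mk]; exact Nat.mod_eq_of_lt (by omega))
  have wstep : ∀ (σ : Equiv.Perm (Fin T)) (m : ℕ),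
      w σ (m+1) = proj (w σ m - η (m+1) •
        gradient (fun u => f u (ordSeq hT σ (m+1))) (w σ m)) := fun σ m => rfl
  have w_congr : ∀ (π π' : Equiv.Perm (Fin T)) (m : ℕ), m ≤ T →
      (∀ k : Fin T, (k : ℕ) < m → π k = π' k) → w π m = w π' m := by
    intro π π' m hmT hk
    apply gdIter_congr
    intro r h1 h2
    unfold ordSeq
    exact hk _ (by show (r-1) % T < m; rw [Nat.mod_eq_of_lt (by omega : r - 1 < T)]; omega)
  have hTne : (T:ℝ) ≠ 0 := ne_of_gt hT0
  have hinv : ∀ u, ∑ z : Fin T, gradient (fun x => f x z) u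
      = (T:ℝ) • gradient (fun u => (1 / T : ℝ) * ∑ z : Fin T, f u z) u := by
    intro u
    rw [gFz u, smul_smul, mul_one_div, div_self hTne, one_smul]
  have hTlam : (t:ℝ) * β ≤ (T:ℝ) * lam / 2 := by
    have h2 : (0:ℝ) < 2 * (β / lam) := by positivity
    have h3 : (t:ℝ) * (2 * (β / lam)) ≤ T := (le_div_iff₀ h2).mp htτ
    have h4 : (t:ℝ) * (2 * (β / lam)) * (lam / 2) ≤ (T:ℝ) * (lam / 2) :=
      mul_le_mul_of_nonneg_right h3 (by positivity)
    calc (t:ℝ) * β = (t:ℝ) * (2 * (β / lam)) * (lam / 2) := by field_simp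
      _ ≤ (T:ℝ) * (lam / 2) := h4
      _ = (T:ℝ) * lam / 2 := by ring
  have reindex : ∀ (s : Equiv.Perm (Fin T)) (g : Equiv.Perm (Fin T) → ℝ),
      ∑ σ : Equiv.Perm (Fin T), g (σ * s) = ∑ σ : Equiv.Perm (Fin T), g σ :=
    fun s g => Equiv.sum_comp (Equiv.mulRight s) g
  -- ======== coupling contraction lemma ========
  have coupling : ∀ q : ℕ, (hq : q + 1 ≤ t - 1) →
      ∀ m : ℕ, q + 1 ≤ m → m ≤ t - 1 →
      ∑ σ : Equiv.Perm (Fin T),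
          ‖w (σ * Equiv.swap (⟨q, by omega⟩ : Fin T) (⟨t - 1, by omega⟩ : Fin T)) m - w σ m‖ ^ 2
        ≤ (T.factorial : ℝ) *
          (2 * G * η (q+1) * ∏ r ∈ Icc (q+2) m, (1 - lam * η r / 4)) ^ 2 := by
    intro q hq
    set a : Fin T := ⟨q, by omega⟩ with ha
    set b : Fin T := ⟨t - 1, by omega⟩ with hb
    set s := Equiv.swap a b with hs
    have hsk : ∀ k : Fin T, (k:ℕ) ≠ q → (k:ℕ) ≠ t - 1 → s k = k := by
      intro k h1 h2
      exact Equiv.swap_apply_of_ne_of_ne (fun h => h1 (by rw [h])) (fun h => h2 (by rw [h]))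
    have hsa : s a = b := Equiv.swap_apply_left a b
    intro m hm
    induction m, hm using Nat.le_induction with
    | base =>
      intro _
      have hprodE : ∏ r ∈ Icc (q+2) (q+1), (1 - lam * η r / 4) = 1 := by
        rw [Finset.Icc_eq_empty (by omega)]; exact Finset.prod_empty
      rw [hprodE, mul_one]
      have hpath : ∀ σ : Equiv.Perm (Fin T),
          ‖w (σ * s) (q+1) - w σ (q+1)‖ ≤ 2 * G * η (q+1) := by
        intro σ
        have e0 : w (σ * s) q = w σ q := by
          apply w_congr _ _ q (by omega)
          intro k hk
          show σ (s k) = σ k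
          rw [hsk k (by omega) (by omega)]
        rw [wstep, wstep, e0]
        refine (nonexp _ _).trans ?_
        have hz1 : ordSeq hT (σ * s) (q+1) = σ b := by
          rw [hord _ _ (by omega) (by omega)]
          show σ (s a) = σ b
          rw [hsa]
        have hz2 : ordSeq hT σ (q+1) = σ a := by
          rw [hord _ _ (by omega) (by omega)]
          rfl
        rw [hz1, hz2]
        have heq : (w σ q - η (q+1) • gradient (fun u => f u (σ b)) (w σ q))
            - (w σ q - η (q+1) • gradient (fun u => f u (σ a)) (w σ q))
            = η (q+1) • (gradient (fun u => f u (σ a)) (w σ q)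
              - gradient (fun u => f u (σ b)) (w σ q)) := by
          rw [smul_sub]; abel
        rw [heq, norm_smul, Real.norm_eq_abs, abs_of_nonneg (hηnn _)]
        have h1 : ‖gradient (fun u => f u (σ a)) (w σ q)
            - gradient (fun u => f u (σ b)) (w σ q)‖ ≤ 2 * G := by
          refine (norm_sub_le _ _).trans ?_
          have e1 := hLip (σ a) (w σ q) (memW σ q)
          have e2 := hLip (σ b) (w σ q) (memW σ q)
          linarith
        calc η (q+1) * ‖gradient (fun u => f u (σ a)) (w σ q)
              - gradient (fun u => f u (σ b)) (w σ q)‖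
            ≤ η (q+1) * (2*G) := mul_le_mul_of_nonneg_left h1 (hηnn _)
          _ = 2*G*η (q+1) := by ring
      calc ∑ σ : Equiv.Perm (Fin T), ‖w (σ*s) (q+1) - w σ (q+1)‖^2
          ≤ ∑ _σ : Equiv.Perm (Fin T), (2*G*η (q+1))^2 := by
            apply Finset.sum_le_sum; intro σ _
            exact pow_le_pow_left₀ (norm_nonneg _) (hpath σ) 2
        _ = (T.factorial : ℝ) * (2*G*η (q+1))^2 := by
            rw [Finset.sum_const, Finset.card_univ, Fintype.card_perm, Fintype.card_fin,
              nsmul_eq_mul]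
    | succ m hqm ih =>
      intro hm1
      have ihm := ih (by omega)
      have hmT : m < T := by omega
      set pm : Fin T := ⟨m, by omega⟩ with hpm
      set J : Finset (Fin T) :=
        Finset.univ.filter (fun j : Fin T => m ≤ (j:ℕ) ∧ (j:ℕ) ≠ t - 1) with hJ
      have hJcard : J.card = T - m - 1 := card_J (by omega) htT
      have hn1 : 1 ≤ T - m - 1 := by omega
      have hx0 : 0 ≤ 1 - lam * η (m+1) / 4 := hfac0 (m+1) (by omega)
      -- pathwise one-step
      have stepA : ∀ σ : Equiv.Perm (Fin T),
          ‖w (σ * s) (m+1) - w σ (m+1)‖^2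
            ≤ ‖(w (σ*s) m - w σ m) - η (m+1) • (gradient (fun u => f u (σ pm)) (w (σ*s) m)
                - gradient (fun u => f u (σ pm)) (w σ m))‖^2 := by
        intro σ
        apply pow_le_pow_left₀ (norm_nonneg _) _ 2
        rw [wstep, wstep]
        have hz1 : ordSeq hT (σ * s) (m+1) = σ pm := by
          rw [hord _ _ (by omega) (by omega)]
          show σ (s pm) = σ pm
          rw [hsk pm (by show m ≠ q; omega) (by show m ≠ t - 1; omega)]
        have hz2 : ordSeq hT σ (m+1) = σ pm := by
          rw [hord _ _ (by omega) (by omega)]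
          rfl
        rw [hz1, hz2]
        refine (nonexp _ _).trans (le_of_eq ?_)
        congr 1
        rw [smul_sub]; abel
      -- conditional reindexing
      have stepB : ∀ j ∈ J,
          (∑ σ : Equiv.Perm (Fin T),
            ‖(w (σ*s) m - w σ m) - η (m+1) • (gradient (fun u => f u (σ pm)) (w (σ*s) m)
              - gradient (fun u => f u (σ pm)) (w σ m))‖^2)
          = ∑ σ : Equiv.Perm (Fin T),
            ‖(w (σ*s) m - w σ m) - η (m+1) • (gradient (fun u => f u (σ j)) (w (σ*s) m)
              - gradient (fun u => f u (σ j)) (w σ m))‖^2 := by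
        intro j hj
        simp only [hJ, Finset.mem_filter, Finset.mem_univ, true_and] at hj
        rw [← reindex (Equiv.swap pm j)]
        apply Finset.sum_congr rfl
        intro σ _
        have h1 : w (σ * Equiv.swap pm j) m = w σ m := by
          apply w_congr _ _ m (by omega)
          intro k hk
          show σ (Equiv.swap pm j k) = σ k
          rw [Equiv.swap_apply_of_ne_of_ne
            (fun h => by rw [h] at hk; simp only [hpm] at hk; omega)
            (fun h => by rw [h] at hk; omega)]
        have h2 : w (σ * Equiv.swap pm j * s) m = w (σ * s) m := by
          apply w_congr _ _ m (by omega)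
          intro k hk
          show σ (Equiv.swap pm j (s k)) = σ (s k)
          congr 1
          by_cases hka : k = a
          · rw [hka, hsa]
            exact Equiv.swap_apply_of_ne_of_ne
              (fun h => by rw [hb] at h; apply_fun Fin.val at h; simp [hpm] at h; omega)
              (fun h => by rw [hb] at h; apply_fun Fin.val at h; simp at h; omega)
          · have hkq : (k:ℕ) ≠ q := fun h => hka (Fin.ext h)
            rw [hsk k hkq (by omega)]
            exact Equiv.swap_apply_of_ne_of_ne
              (fun h => by apply_fun Fin.val at h; simp [hpm] at h; omega)
              (fun h => by apply_fun Fin.val at h; omega)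
        have h3 : (σ * Equiv.swap pm j) pm = σ j := by
          show σ (Equiv.swap pm j pm) = σ j
          rw [Equiv.swap_apply_left]
        show ‖(w (σ * Equiv.swap pm j * s) m - w (σ * Equiv.swap pm j) m)
            - η (m+1) • (gradient (fun u => f u ((σ * Equiv.swap pm j) pm)) (w (σ * Equiv.swap pm j * s) m)
              - gradient (fun u => f u ((σ * Equiv.swap pm j) pm)) (w (σ * Equiv.swap pm j) m))‖^2 = _
        rw [h1, h2, h3]
      have hmr : ((m:ℝ)+1) * β ≤ (T:ℝ) * lam / 2 := by
        have hmt2 : ((m:ℝ)+1) ≤ (t:ℝ) := by exact_mod_cast (by omega : m + 1 ≤ t)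
        calc ((m:ℝ)+1) * β ≤ (t:ℝ) * β := mul_le_mul_of_nonneg_right hmt2 hβ.le
          _ ≤ (T:ℝ) * lam / 2 := hTlam
      have hJJc : J.card + (Finset.univ.filter
          (fun j : Fin T => ¬(m ≤ (j:ℕ) ∧ (j:ℕ) ≠ t - 1))).card = T := by
        rw [hJ]
        rw [Finset.card_filter_add_card_filter_not]
        simp
      have hinnerJ : ∀ σ : Equiv.Perm (Fin T),
          (T:ℝ) * (lam * ‖w (σ*s) m - w σ m‖^2) - ((m:ℝ)+1) * (β * ‖w (σ*s) m - w σ m‖^2)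
          ≤ (inner ℝ (w (σ*s) m - w σ m) (∑ j ∈ J, (gradient (fun u => f u (σ j)) (w (σ*s) m)
              - gradient (fun u => f u (σ j)) (w σ m))) : ℝ) := by
        intro σ
        have hsplit : ∑ j ∈ J, (gradient (fun u => f u (σ j)) (w (σ*s) m)
              - gradient (fun u => f u (σ j)) (w σ m))
            = (∑ j : Fin T, (gradient (fun u => f u (σ j)) (w (σ*s) m)
              - gradient (fun u => f u (σ j)) (w σ m)))
              - ∑ j ∈ Finset.univ.filter (fun j : Fin T => ¬(m ≤ (j:ℕ) ∧ (j:ℕ) ≠ t - 1)),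
                (gradient (fun u => f u (σ j)) (w (σ*s) m)
                  - gradient (fun u => f u (σ j)) (w σ m)) := by
          rw [eq_sub_iff_add_eq, hJ]
          exact Finset.sum_filter_add_sum_filter_not Finset.univ _ _
        have huniv : (∑ j : Fin T, (gradient (fun u => f u (σ j)) (w (σ*s) m)
              - gradient (fun u => f u (σ j)) (w σ m)))
            = (T:ℝ) • (gradient (fun u => (1 / T : ℝ) * ∑ z : Fin T, f u z) (w (σ*s) m)
              - gradient (fun u => (1 / T : ℝ) * ∑ z : Fin T, f u z) (w σ m)) := by
          rw [Finset.sum_sub_distrib]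
          rw [Equiv.sum_comp σ (fun z => gradient (fun u => f u z) (w (σ*s) m)),
            Equiv.sum_comp σ (fun z => gradient (fun u => f u z) (w σ m))]
          rw [hinv, hinv, smul_sub]
        have hinner_univ : (T:ℝ) * (lam * ‖w (σ*s) m - w σ m‖^2)
            ≤ (inner ℝ (w (σ*s) m - w σ m) (∑ j : Fin T, (gradient (fun u => f u (σ j)) (w (σ*s) m)
              - gradient (fun u => f u (σ j)) (w σ m))) : ℝ) := by
          rw [huniv, real_inner_smul_right, real_inner_comm]
          exact mul_le_mul_of_nonneg_left (mono (w (σ*s) m) (memW _ _) (w σ m) (memW _ _)) hT0.le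
        have hinner_c : (inner ℝ (w (σ*s) m - w σ m)
            (∑ j ∈ Finset.univ.filter (fun j : Fin T => ¬(m ≤ (j:ℕ) ∧ (j:ℕ) ≠ t - 1)),
              (gradient (fun u => f u (σ j)) (w (σ*s) m)
                - gradient (fun u => f u (σ j)) (w σ m))) : ℝ)
            ≤ ((m:ℝ)+1) * (β * ‖w (σ*s) m - w σ m‖^2) := by
          rw [inner_sum]
          calc ∑ j ∈ Finset.univ.filter (fun j : Fin T => ¬(m ≤ (j:ℕ) ∧ (j:ℕ) ≠ t - 1)),
                (inner ℝ (w (σ*s) m - w σ m) (gradient (fun u => f u (σ j)) (w (σ*s) m)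
                  - gradient (fun u => f u (σ j)) (w σ m)) : ℝ)
              ≤ ∑ _j ∈ Finset.univ.filter (fun j : Fin T => ¬(m ≤ (j:ℕ) ∧ (j:ℕ) ≠ t - 1)),
                β * ‖w (σ*s) m - w σ m‖^2 := by
                apply Finset.sum_le_sum
                intro j _
                calc (inner ℝ (w (σ*s) m - w σ m) (gradient (fun u => f u (σ j)) (w (σ*s) m)
                      - gradient (fun u => f u (σ j)) (w σ m)) : ℝ)
                    ≤ ‖w (σ*s) m - w σ m‖ * ‖gradient (fun u => f u (σ j)) (w (σ*s) m)
                      - gradient (fun u => f u (σ j)) (w σ m)‖ := real_inner_le_norm _ _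
                  _ ≤ ‖w (σ*s) m - w σ m‖ * (β * ‖w (σ*s) m - w σ m‖) :=
                    mul_le_mul_of_nonneg_left
                      (hsmooth (σ j) (w (σ*s) m) (memW _ _) (w σ m) (memW _ _)) (norm_nonneg _)
                  _ = β * ‖w (σ*s) m - w σ m‖^2 := by ring
            _ = ((m:ℝ)+1) * (β * ‖w (σ*s) m - w σ m‖^2) := by
                rw [Finset.sum_const, nsmul_eq_mul]
                have : (Finset.univ.filter
                    (fun j : Fin T => ¬(m ≤ (j:ℕ) ∧ (j:ℕ) ≠ t - 1))).card = m + 1 := by omega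
                rw [this]
                push_cast
                ring
        rw [hsplit, inner_sub_right]
        linarith
      have stepC : ∀ σ : Equiv.Perm (Fin T),
          ∑ j ∈ J, ‖(w (σ*s) m - w σ m) - η (m+1) • (gradient (fun u => f u (σ j)) (w (σ*s) m)
              - gradient (fun u => f u (σ j)) (w σ m))‖^2
          ≤ (J.card : ℝ) * ((1 - lam * η (m+1)/4)^2 * ‖w (σ*s) m - w σ m‖^2) := by
        intro σ
        refine avg_contract J (w (σ*s) m - w σ m)
          (fun j => gradient (fun u => f u (σ j)) (w (σ*s) m)
            - gradient (fun u => f u (σ j)) (w σ m))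
          (η (m+1)) β lam (T:ℝ) ((m:ℝ)+1)
          (fun j _ => hsmooth (σ j) (w (σ*s) m) (memW _ _) (w σ m) (memW _ _))
          (hinnerJ σ) hβ hlam (hηnn _) (hηcap _) hmr ?_
        rw [hJcard]
        have : ((T - m - 1 : ℕ) : ℝ) ≤ (T:ℕ) := by exact_mod_cast (by omega : T - m - 1 ≤ T)
        exact this
      -- combine
      have A1 : ∑ σ : Equiv.Perm (Fin T), ‖w (σ*s) (m+1) - w σ (m+1)‖^2
          ≤ ∑ σ : Equiv.Perm (Fin T), ‖(w (σ*s) m - w σ m)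
            - η (m+1) • (gradient (fun u => f u (σ pm)) (w (σ*s) m)
              - gradient (fun u => f u (σ pm)) (w σ m))‖^2 :=
        Finset.sum_le_sum (fun σ _ => stepA σ)
      have hpmJ : pm ∈ J := by
        rw [hJ]
        simp only [Finset.mem_filter, Finset.mem_univ, true_and]
        constructor
        · show m ≤ m; exact le_rfl
        · show m ≠ t - 1; omega
      have A2 : (J.card : ℝ) * ∑ σ : Equiv.Perm (Fin T), ‖(w (σ*s) m - w σ m)
            - η (m+1) • (gradient (fun u => f u (σ pm)) (w (σ*s) m)
              - gradient (fun u => f u (σ pm)) (w σ m))‖^2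
          = ∑ σ : Equiv.Perm (Fin T), ∑ j ∈ J, ‖(w (σ*s) m - w σ m)
            - η (m+1) • (gradient (fun u => f u (σ j)) (w (σ*s) m)
              - gradient (fun u => f u (σ j)) (w σ m))‖^2 := by
        calc (J.card : ℝ) * ∑ σ : Equiv.Perm (Fin T), ‖(w (σ*s) m - w σ m)
              - η (m+1) • (gradient (fun u => f u (σ pm)) (w (σ*s) m)
                - gradient (fun u => f u (σ pm)) (w σ m))‖^2
            = ∑ _j ∈ J, ∑ σ : Equiv.Perm (Fin T), ‖(w (σ*s) m - w σ m)
              - η (m+1) • (gradient (fun u => f u (σ pm)) (w (σ*s) m)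
                - gradient (fun u => f u (σ pm)) (w σ m))‖^2 := by
              rw [Finset.sum_const, nsmul_eq_mul]
          _ = ∑ j ∈ J, ∑ σ : Equiv.Perm (Fin T), ‖(w (σ*s) m - w σ m)
              - η (m+1) • (gradient (fun u => f u (σ j)) (w (σ*s) m)
                - gradient (fun u => f u (σ j)) (w σ m))‖^2 :=
              Finset.sum_congr rfl (fun j hj => stepB j hj)
          _ = ∑ σ : Equiv.Perm (Fin T), ∑ j ∈ J, ‖(w (σ*s) m - w σ m)
              - η (m+1) • (gradient (fun u => f u (σ j)) (w (σ*s) m)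
                - gradient (fun u => f u (σ j)) (w σ m))‖^2 := Finset.sum_comm
      have A3 : ∑ σ : Equiv.Perm (Fin T), ∑ j ∈ J, ‖(w (σ*s) m - w σ m)
            - η (m+1) • (gradient (fun u => f u (σ j)) (w (σ*s) m)
              - gradient (fun u => f u (σ j)) (w σ m))‖^2
          ≤ (J.card : ℝ) * ((1 - lam * η (m+1)/4)^2
              * ∑ σ : Equiv.Perm (Fin T), ‖w (σ*s) m - w σ m‖^2) := by
        calc ∑ σ : Equiv.Perm (Fin T), ∑ j ∈ J, ‖(w (σ*s) m - w σ m)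
              - η (m+1) • (gradient (fun u => f u (σ j)) (w (σ*s) m)
                - gradient (fun u => f u (σ j)) (w σ m))‖^2
            ≤ ∑ σ : Equiv.Perm (Fin T),
              (J.card : ℝ) * ((1 - lam * η (m+1)/4)^2 * ‖w (σ*s) m - w σ m‖^2) :=
              Finset.sum_le_sum (fun σ _ => stepC σ)
          _ = (J.card : ℝ) * ((1 - lam * η (m+1)/4)^2
              * ∑ σ : Equiv.Perm (Fin T), ‖w (σ*s) m - w σ m‖^2) := by
              rw [← Finset.mul_sum, ← Finset.mul_sum]
      have hcard0 : (0:ℝ) < (J.card : ℝ) := by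
        rw [hJcard]
        exact_mod_cast (by omega : 0 < T - m - 1)
      have final1 : ∑ σ : Equiv.Perm (Fin T), ‖w (σ*s) (m+1) - w σ (m+1)‖^2
          ≤ (1 - lam * η (m+1)/4)^2 * ∑ σ : Equiv.Perm (Fin T), ‖w (σ*s) m - w σ m‖^2 := by
        have h5 : (J.card : ℝ) * ∑ σ : Equiv.Perm (Fin T), ‖w (σ*s) (m+1) - w σ (m+1)‖^2
            ≤ (J.card : ℝ) * ((1 - lam * η (m+1)/4)^2
              * ∑ σ : Equiv.Perm (Fin T), ‖w (σ*s) m - w σ m‖^2) := by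
          calc (J.card : ℝ) * ∑ σ : Equiv.Perm (Fin T), ‖w (σ*s) (m+1) - w σ (m+1)‖^2
              ≤ (J.card : ℝ) * ∑ σ : Equiv.Perm (Fin T), ‖(w (σ*s) m - w σ m)
                - η (m+1) • (gradient (fun u => f u (σ pm)) (w (σ*s) m)
                  - gradient (fun u => f u (σ pm)) (w σ m))‖^2 :=
                mul_le_mul_of_nonneg_left A1 hcard0.le
            _ = _ := A2
            _ ≤ _ := A3
        exact le_of_mul_le_mul_left h5 hcard0
      calc ∑ σ : Equiv.Perm (Fin T), ‖w (σ*s) (m+1) - w σ (m+1)‖^2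
          ≤ (1 - lam * η (m+1)/4)^2 * ∑ σ : Equiv.Perm (Fin T), ‖w (σ*s) m - w σ m‖^2 :=
            final1
        _ ≤ (1 - lam * η (m+1)/4)^2 * ((T.factorial : ℝ) *
            (2 * G * η (q+1) * ∏ r ∈ Icc (q+2) m, (1 - lam * η r / 4)) ^ 2) :=
            mul_le_mul_of_nonneg_left ihm (sq_nonneg _)
        _ = (T.factorial : ℝ) *
            (2 * G * η (q+1) * ∏ r ∈ Icc (q+2) (m+1), (1 - lam * η r / 4)) ^ 2 := by
            rw [Finset.prod_Icc_succ_top (by omega : q+2 ≤ m+1)]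
            ring
  have hfact0 : (0:ℝ) < (T.factorial : ℝ) := by exact_mod_cast T.factorial_pos
  have couplingL1 : ∀ q : ℕ, (hq : q + 1 ≤ t - 1) →
      ∑ σ : Equiv.Perm (Fin T),
        ‖w (σ * Equiv.swap (⟨q, by omega⟩ : Fin T) (⟨t - 1, by omega⟩ : Fin T)) (t-1) - w σ (t-1)‖
      ≤ (T.factorial : ℝ) * (2 * G * η (q+1) * ∏ r ∈ Icc (q+2) (t-1), (1 - lam * η r / 4)) := by
    intro q hq
    have hK0 : 0 ≤ 2 * G * η (q+1) * ∏ r ∈ Icc (q+2) (t-1), (1 - lam * η r / 4) :=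
      mul_nonneg (mul_nonneg (by positivity) (hηnn _)) (hprod0 _ _ (by omega))
    have hsq := coupling q hq (t-1) hq le_rfl
    have hcs := Finset.sum_mul_sq_le_sq_mul_sq Finset.univ (fun _ => (1:ℝ))
      (fun σ => ‖w (σ * Equiv.swap (⟨q, by omega⟩ : Fin T) (⟨t - 1, by omega⟩ : Fin T)) (t-1)
        - w σ (t-1)‖)
    simp only [one_pow, one_mul, Finset.sum_const, Finset.card_univ, Fintype.card_perm,
      Fintype.card_fin, nsmul_eq_mul, mul_one] at hcs
    have h2 : (∑ σ : Equiv.Perm (Fin T),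
        ‖w (σ * Equiv.swap (⟨q, by omega⟩ : Fin T) (⟨t - 1, by omega⟩ : Fin T)) (t-1)
          - w σ (t-1)‖)^2
        ≤ ((T.factorial : ℝ) * (2 * G * η (q+1) * ∏ r ∈ Icc (q+2) (t-1), (1 - lam * η r / 4)))^2 := by
      calc (∑ σ : Equiv.Perm (Fin T),
          ‖w (σ * Equiv.swap (⟨q, by omega⟩ : Fin T) (⟨t - 1, by omega⟩ : Fin T)) (t-1)
            - w σ (t-1)‖)^2
          ≤ (T.factorial : ℝ) * ∑ σ : Equiv.Perm (Fin T),
            ‖w (σ * Equiv.swap (⟨q, by omega⟩ : Fin T) (⟨t - 1, by omega⟩ : Fin T)) (t-1)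
              - w σ (t-1)‖^2 := hcs
        _ ≤ (T.factorial : ℝ) * ((T.factorial : ℝ) *
            (2 * G * η (q+1) * ∏ r ∈ Icc (q+2) (t-1), (1 - lam * η r / 4))^2) :=
            mul_le_mul_of_nonneg_left hsq hfact0.le
        _ = ((T.factorial : ℝ) *
            (2 * G * η (q+1) * ∏ r ∈ Icc (q+2) (t-1), (1 - lam * η r / 4)))^2 := by ring
    exact le_of_pow_le_pow_left₀ two_ne_zero (by positivity) h2
  -- pathwise pairing inequality
  have pair : ∀ (z : Fin T) (uu vv : EuclideanSpace ℝ (Fin d)), uu ∈ W → vv ∈ W →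
      (inner ℝ (gradient (fun u => f u z) vv) (vv - wstar) : ℝ)
        - (inner ℝ (gradient (fun u => f u z) uu) (uu - wstar) : ℝ)
      ≤ (G + β * D) * ‖vv - uu‖ := by
    intro z uu vv hu hv
    have e1 : (inner ℝ (gradient (fun u => f u z) vv) (vv - wstar) : ℝ)
        - (inner ℝ (gradient (fun u => f u z) uu) (uu - wstar) : ℝ)
        = (inner ℝ (gradient (fun u => f u z) vv - gradient (fun u => f u z) uu) (vv - wstar) : ℝ)
          + (inner ℝ (gradient (fun u => f u z) uu) (vv - uu) : ℝ) := by
      simp only [inner_sub_left, inner_sub_right]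
      ring
    rw [e1]
    have b1 : (inner ℝ (gradient (fun u => f u z) vv - gradient (fun u => f u z) uu) (vv - wstar) : ℝ)
        ≤ (β * ‖vv - uu‖) * D := by
      calc (inner ℝ (gradient (fun u => f u z) vv - gradient (fun u => f u z) uu) (vv - wstar) : ℝ)
          ≤ ‖gradient (fun u => f u z) vv - gradient (fun u => f u z) uu‖ * ‖vv - wstar‖ :=
            real_inner_le_norm _ _
        _ ≤ (β * ‖vv - uu‖) * D := by
            apply mul_le_mul (hsmooth z vv hv uu hu) (hbD vv hv) (norm_nonneg _)
            positivity
    have b2 : (inner ℝ (gradient (fun u => f u z) uu) (vv - uu) : ℝ) ≤ G * ‖vv - uu‖ := by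
      calc (inner ℝ (gradient (fun u => f u z) uu) (vv - uu) : ℝ)
          ≤ ‖gradient (fun u => f u z) uu‖ * ‖vv - uu‖ := real_inner_le_norm _ _
        _ ≤ G * ‖vv - uu‖ := mul_le_mul_of_nonneg_right (hLip z uu hu) (norm_nonneg _)
    nlinarith [norm_nonneg (vv - uu)]
  have hb2 : t - 1 < T := by omega
  -- rewrite the bias summand as an average over positions
  have hBrw : ∀ σ : Equiv.Perm (Fin T),
      (inner ℝ (gradient (fun u => (1 / T : ℝ) * ∑ z : Fin T, f u z) (w σ (t-1))
          - gradient (fun u => f u (σ (⟨t-1, hb2⟩ : Fin T))) (w σ (t-1)))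
        (w σ (t-1) - wstar) : ℝ)
      = (T:ℝ)⁻¹ * ∑ j : Fin T,
          ((inner ℝ (gradient (fun u => f u (σ j)) (w σ (t-1))) (w σ (t-1) - wstar) : ℝ)
            - (inner ℝ (gradient (fun u => f u (σ (⟨t-1, hb2⟩ : Fin T))) (w σ (t-1)))
                (w σ (t-1) - wstar) : ℝ)) := by
    intro σ
    rw [inner_sub_left, gFz (w σ (t-1))]
    rw [← Equiv.sum_comp σ (fun z => gradient (fun u => f u z) (w σ (t-1)))]
    rw [real_inner_smul_left, sum_inner]
    rw [Finset.sum_sub_distrib, Finset.sum_const, Finset.card_univ, Fintype.card_fin,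
      nsmul_eq_mul]
    field_simp
  -- positions at or after t-1 contribute zero
  have hczero : ∀ j : Fin T, t - 1 ≤ (j:ℕ) →
      ∑ σ : Equiv.Perm (Fin T),
        ((inner ℝ (gradient (fun u => f u (σ j)) (w σ (t-1))) (w σ (t-1) - wstar) : ℝ)
          - (inner ℝ (gradient (fun u => f u (σ (⟨t-1, hb2⟩ : Fin T))) (w σ (t-1)))
              (w σ (t-1) - wstar) : ℝ)) = 0 := by
    intro j hj
    rw [Finset.sum_sub_distrib]
    have heq : ∑ σ : Equiv.Perm (Fin T),
        (inner ℝ (gradient (fun u => f u (σ j)) (w σ (t-1))) (w σ (t-1) - wstar) : ℝ)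
        = ∑ σ : Equiv.Perm (Fin T),
        (inner ℝ (gradient (fun u => f u (σ (⟨t-1, hb2⟩ : Fin T))) (w σ (t-1)))
          (w σ (t-1) - wstar) : ℝ) := by
      rw [← reindex (Equiv.swap j (⟨t-1, hb2⟩ : Fin T))
        (fun σ => (inner ℝ (gradient (fun u => f u (σ (⟨t-1, hb2⟩ : Fin T))) (w σ (t-1)))
          (w σ (t-1) - wstar) : ℝ))]
      apply Finset.sum_congr rfl
      intro σ _
      have hu : w (σ * Equiv.swap j (⟨t-1, hb2⟩ : Fin T)) (t-1) = w σ (t-1) := by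
        apply w_congr _ _ _ (by omega)
        intro k hk
        show σ (Equiv.swap j (⟨t-1, hb2⟩ : Fin T) k) = σ k
        rw [Equiv.swap_apply_of_ne_of_ne
          (fun h => by apply_fun Fin.val at h; omega)
          (fun h => by apply_fun Fin.val at h; simp at h; omega)]
      have hv : (σ * Equiv.swap j (⟨t-1, hb2⟩ : Fin T)) (⟨t-1, hb2⟩ : Fin T) = σ j := by
        show σ (Equiv.swap j (⟨t-1, hb2⟩ : Fin T) (⟨t-1, hb2⟩ : Fin T)) = σ j
        rw [Equiv.swap_apply_right]
      rw [hu, hv]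
    rw [heq, sub_self]
  -- positions before t-1: bounded via the coupling
  have hcneg : ∀ j : Fin T, (hj : (j:ℕ) < t - 1) →
      ∑ σ : Equiv.Perm (Fin T),
        ((inner ℝ (gradient (fun u => f u (σ j)) (w σ (t-1))) (w σ (t-1) - wstar) : ℝ)
          - (inner ℝ (gradient (fun u => f u (σ (⟨t-1, hb2⟩ : Fin T))) (w σ (t-1)))
              (w σ (t-1) - wstar) : ℝ))
      ≤ (G + β * D) * ((T.factorial : ℝ) *
          (2 * G * η ((j:ℕ)+1) * ∏ r ∈ Icc ((j:ℕ)+2) (t-1), (1 - lam * η r / 4))) := by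
    intro j hj
    have heq : ∑ σ : Equiv.Perm (Fin T),
        (inner ℝ (gradient (fun u => f u (σ j)) (w σ (t-1))) (w σ (t-1) - wstar) : ℝ)
        = ∑ σ : Equiv.Perm (Fin T),
          (inner ℝ (gradient (fun u => f u (σ (⟨t-1, hb2⟩ : Fin T)))
              (w (σ * Equiv.swap j (⟨t-1, hb2⟩ : Fin T)) (t-1)))
            (w (σ * Equiv.swap j (⟨t-1, hb2⟩ : Fin T)) (t-1) - wstar) : ℝ) := by
      rw [← reindex (Equiv.swap j (⟨t-1, hb2⟩ : Fin T))
        (fun σ => (inner ℝ (gradient (fun u => f u (σ j)) (w σ (t-1))) (w σ (t-1) - wstar) : ℝ))]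
      apply Finset.sum_congr rfl
      intro σ _
      have hv : (σ * Equiv.swap j (⟨t-1, hb2⟩ : Fin T)) j = σ (⟨t-1, hb2⟩ : Fin T) := by
        show σ (Equiv.swap j (⟨t-1, hb2⟩ : Fin T) j) = σ (⟨t-1, hb2⟩ : Fin T)
        rw [Equiv.swap_apply_left]
      rw [hv]
    rw [Finset.sum_sub_distrib, heq, ← Finset.sum_sub_distrib]
    calc ∑ σ : Equiv.Perm (Fin T),
        ((inner ℝ (gradient (fun u => f u (σ (⟨t-1, hb2⟩ : Fin T)))
            (w (σ * Equiv.swap j (⟨t-1, hb2⟩ : Fin T)) (t-1)))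
          (w (σ * Equiv.swap j (⟨t-1, hb2⟩ : Fin T)) (t-1) - wstar) : ℝ)
          - (inner ℝ (gradient (fun u => f u (σ (⟨t-1, hb2⟩ : Fin T))) (w σ (t-1)))
              (w σ (t-1) - wstar) : ℝ))
        ≤ ∑ σ : Equiv.Perm (Fin T),
          (G + β * D) * ‖w (σ * Equiv.swap j (⟨t-1, hb2⟩ : Fin T)) (t-1) - w σ (t-1)‖ := by
          apply Finset.sum_le_sum
          intro σ _
          exact pair (σ (⟨t-1, hb2⟩ : Fin T)) (w σ (t-1))
            (w (σ * Equiv.swap j (⟨t-1, hb2⟩ : Fin T)) (t-1)) (memW _ _) (memW _ _)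
      _ = (G + β * D) * ∑ σ : Equiv.Perm (Fin T),
          ‖w (σ * Equiv.swap j (⟨t-1, hb2⟩ : Fin T)) (t-1) - w σ (t-1)‖ := by
          rw [Finset.mul_sum]
      _ ≤ (G + β * D) * ((T.factorial : ℝ) *
          (2 * G * η ((j:ℕ)+1) * ∏ r ∈ Icc ((j:ℕ)+2) (t-1), (1 - lam * η r / 4))) := by
          apply mul_le_mul_of_nonneg_left _ (by positivity)
          exact couplingL1 (j:ℕ) (by omega)
  have hfacle : ∀ r : ℕ, 1 ≤ r → lam * η r / 4 ≤ 1 := by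
    intro r hr; have := hfac0 r hr; linarith
  have htele := teleSum lam hlam η (fun r _ => hηnn r) hfacle (t-1)
  have hsum_filter : ∑ j ∈ Finset.univ.filter (fun j : Fin T => (j:ℕ) < t - 1),
        (η ((j:ℕ)+1) * ∏ r ∈ Icc ((j:ℕ)+2) (t-1), (1 - lam * η r / 4))
      = ∑ q ∈ Finset.range (t-1), (η (q+1) * ∏ r ∈ Icc (q+2) (t-1), (1 - lam * η r / 4)) := by
    refine Finset.sum_bij' (fun (j : Fin T) _ => (j:ℕ))
      (fun q hq => (⟨q, by simp only [Finset.mem_range] at hq; omega⟩ : Fin T))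
      ?_ ?_ ?_ ?_ ?_
    · intro a ha
      simp only [Finset.mem_filter, Finset.mem_univ, true_and] at ha
      simp only [Finset.mem_range]
      exact ha
    · intro q hq
      simp only [Finset.mem_range] at hq
      simp only [Finset.mem_filter, Finset.mem_univ, true_and]
      exact hq
    · intro a ha; rfl
    · intro q hq; rfl
    · intro a ha; rfl
  have htotal : ∑ σ : Equiv.Perm (Fin T),
      (inner ℝ (gradient (fun u => (1 / T : ℝ) * ∑ z : Fin T, f u z) (w σ (t-1))
          - gradient (fun u => f u (ordSeq hT σ t)) (w σ (t-1)))
        (w σ (t-1) - wstar) : ℝ)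
      ≤ 8 * G * (G + β * D) / (lam * T) * (T.factorial : ℝ) := by
    have e1 : ∑ σ : Equiv.Perm (Fin T),
        (inner ℝ (gradient (fun u => (1 / T : ℝ) * ∑ z : Fin T, f u z) (w σ (t-1))
            - gradient (fun u => f u (ordSeq hT σ t)) (w σ (t-1)))
          (w σ (t-1) - wstar) : ℝ)
        = (T:ℝ)⁻¹ * ∑ j : Fin T, ∑ σ : Equiv.Perm (Fin T),
          ((inner ℝ (gradient (fun u => f u (σ j)) (w σ (t-1))) (w σ (t-1) - wstar) : ℝ)
            - (inner ℝ (gradient (fun u => f u (σ (⟨t-1, hb2⟩ : Fin T))) (w σ (t-1)))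
                (w σ (t-1) - wstar) : ℝ)) := by
      calc ∑ σ : Equiv.Perm (Fin T),
          (inner ℝ (gradient (fun u => (1 / T : ℝ) * ∑ z : Fin T, f u z) (w σ (t-1))
              - gradient (fun u => f u (ordSeq hT σ t)) (w σ (t-1)))
            (w σ (t-1) - wstar) : ℝ)
          = ∑ σ : Equiv.Perm (Fin T), (T:ℝ)⁻¹ * ∑ j : Fin T,
            ((inner ℝ (gradient (fun u => f u (σ j)) (w σ (t-1))) (w σ (t-1) - wstar) : ℝ)
              - (inner ℝ (gradient (fun u => f u (σ (⟨t-1, hb2⟩ : Fin T))) (w σ (t-1)))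
                  (w σ (t-1) - wstar) : ℝ)) := by
            apply Finset.sum_congr rfl
            intro σ _
            rw [hord σ t ht1 htT]
            exact hBrw σ
        _ = (T:ℝ)⁻¹ * ∑ σ : Equiv.Perm (Fin T), ∑ j : Fin T,
            ((inner ℝ (gradient (fun u => f u (σ j)) (w σ (t-1))) (w σ (t-1) - wstar) : ℝ)
              - (inner ℝ (gradient (fun u => f u (σ (⟨t-1, hb2⟩ : Fin T))) (w σ (t-1)))
                  (w σ (t-1) - wstar) : ℝ)) := by rw [Finset.mul_sum]
        _ = (T:ℝ)⁻¹ * ∑ j : Fin T, ∑ σ : Equiv.Perm (Fin T),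
            ((inner ℝ (gradient (fun u => f u (σ j)) (w σ (t-1))) (w σ (t-1) - wstar) : ℝ)
              - (inner ℝ (gradient (fun u => f u (σ (⟨t-1, hb2⟩ : Fin T))) (w σ (t-1)))
                  (w σ (t-1) - wstar) : ℝ)) := by rw [Finset.sum_comm]
    rw [e1]
    have e2 : ∑ j : Fin T, ∑ σ : Equiv.Perm (Fin T),
        ((inner ℝ (gradient (fun u => f u (σ j)) (w σ (t-1))) (w σ (t-1) - wstar) : ℝ)
          - (inner ℝ (gradient (fun u => f u (σ (⟨t-1, hb2⟩ : Fin T))) (w σ (t-1)))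
              (w σ (t-1) - wstar) : ℝ))
        = ∑ j ∈ Finset.univ.filter (fun j : Fin T => (j:ℕ) < t - 1),
          ∑ σ : Equiv.Perm (Fin T),
          ((inner ℝ (gradient (fun u => f u (σ j)) (w σ (t-1))) (w σ (t-1) - wstar) : ℝ)
            - (inner ℝ (gradient (fun u => f u (σ (⟨t-1, hb2⟩ : Fin T))) (w σ (t-1)))
                (w σ (t-1) - wstar) : ℝ)) := by
      rw [← Finset.sum_filter_add_sum_filter_not Finset.univ
        (fun j : Fin T => (j:ℕ) < t - 1)]
      have hzero2 : ∑ j ∈ Finset.univ.filter (fun j : Fin T => ¬((j:ℕ) < t - 1)),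
          ∑ σ : Equiv.Perm (Fin T),
          ((inner ℝ (gradient (fun u => f u (σ j)) (w σ (t-1))) (w σ (t-1) - wstar) : ℝ)
            - (inner ℝ (gradient (fun u => f u (σ (⟨t-1, hb2⟩ : Fin T))) (w σ (t-1)))
                (w σ (t-1) - wstar) : ℝ)) = 0 := by
        apply Finset.sum_eq_zero
        intro j hj
        simp only [Finset.mem_filter, Finset.mem_univ, true_and, not_lt] at hj
        exact hczero j hj
      rw [hzero2, add_zero]
    rw [e2]
    have e3 : ∑ j ∈ Finset.univ.filter (fun j : Fin T => (j:ℕ) < t - 1),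
        ∑ σ : Equiv.Perm (Fin T),
        ((inner ℝ (gradient (fun u => f u (σ j)) (w σ (t-1))) (w σ (t-1) - wstar) : ℝ)
          - (inner ℝ (gradient (fun u => f u (σ (⟨t-1, hb2⟩ : Fin T))) (w σ (t-1)))
              (w σ (t-1) - wstar) : ℝ))
        ≤ (G + β * D) * (T.factorial : ℝ) * (2 * G) * (4 / lam) := by
      calc ∑ j ∈ Finset.univ.filter (fun j : Fin T => (j:ℕ) < t - 1),
          ∑ σ : Equiv.Perm (Fin T),
          ((inner ℝ (gradient (fun u => f u (σ j)) (w σ (t-1))) (w σ (t-1) - wstar) : ℝ)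
            - (inner ℝ (gradient (fun u => f u (σ (⟨t-1, hb2⟩ : Fin T))) (w σ (t-1)))
                (w σ (t-1) - wstar) : ℝ))
          ≤ ∑ j ∈ Finset.univ.filter (fun j : Fin T => (j:ℕ) < t - 1),
            (G + β * D) * (T.factorial : ℝ) * (2 * G) *
              (η ((j:ℕ)+1) * ∏ r ∈ Icc ((j:ℕ)+2) (t-1), (1 - lam * η r / 4)) := by
            apply Finset.sum_le_sum
            intro j hj
            simp only [Finset.mem_filter, Finset.mem_univ, true_and] at hj
            refine (hcneg j hj).trans (le_of_eq ?_)
            ring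
        _ = (G + β * D) * (T.factorial : ℝ) * (2 * G) *
            ∑ j ∈ Finset.univ.filter (fun j : Fin T => (j:ℕ) < t - 1),
              (η ((j:ℕ)+1) * ∏ r ∈ Icc ((j:ℕ)+2) (t-1), (1 - lam * η r / 4)) := by
            rw [Finset.mul_sum]
        _ ≤ (G + β * D) * (T.factorial : ℝ) * (2 * G) * (4 / lam) := by
            rw [hsum_filter]
            apply mul_le_mul_of_nonneg_left htele
            positivity
    calc (T:ℝ)⁻¹ * ∑ j ∈ Finset.univ.filter (fun j : Fin T => (j:ℕ) < t - 1),
        ∑ σ : Equiv.Perm (Fin T),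
        ((inner ℝ (gradient (fun u => f u (σ j)) (w σ (t-1))) (w σ (t-1) - wstar) : ℝ)
          - (inner ℝ (gradient (fun u => f u (σ (⟨t-1, hb2⟩ : Fin T))) (w σ (t-1)))
              (w σ (t-1) - wstar) : ℝ))
        ≤ (T:ℝ)⁻¹ * ((G + β * D) * (T.factorial : ℝ) * (2 * G) * (4 / lam)) :=
          mul_le_mul_of_nonneg_left e3 (by positivity)
      _ = 8 * G * (G + β * D) / (lam * T) * (T.factorial : ℝ) := by
          field_simp
          ring
  rw [div_le_iff₀ hfact0]
  exact htotal
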